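/- arXiv:0911.4430 — 5 statements merged into one kernel-verified Lean document; each statement's English description precedes it below -/
import Mathlib

section
/- For every 4-tuple of distinct indices i₁, i₂, i₃, i₄ ∈ {0, 1, …, n}, the cyclic Arnold relation holds: Σ_{σ ∈ A₄} α_{i_{σ(1)} i_{σ(2)}} · α_{i_{σ(2)} i_{σ(3)}} = 0, where A₄ is the alternating group on {1,2,3,4}. -/
/-- **Cyclic Arnold relations.**  Fix `n ≥ 3` and an associative unital `ℝ`-algebra `A`
containing elements `η i` (`1 ≤ i ≤ n`, encoded as `i : Fin n`) and `ω i j = ω j i`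
(`i ≠ j`) such that any two members of the family `{η i} ∪ {ω i j}` anticommute and each
squares to zero, and satisfying the Arnold relations.  Define
`α 0 (i+1) = α (i+1) 0 = η i` and `α (i+1) (j+1) = η i + η j - 2 ω i j`.  Then for every
4-tuple of distinct indices `ind : Fin 4 → Fin (n+1)` the cyclic Arnold relation
`∑_{σ ∈ A₄} α (ind σ(1)) (ind σ(2)) * α (ind σ(2)) (ind σ(3)) = 0` holds, where the sum
runs over the alternating group on four letters (permutations of sign `1`). -/
theorem cyclic_arnold_relation
    (n : ℕ) (hn : 3 ≤ n) (A : Type*) [Ring A] [Algebra ℝ A]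
    (η : Fin n → A) (ω : Fin n → Fin n → A)
    (hωsymm : ∀ i j : Fin n, i ≠ j → ω i j = ω j i)
    (hanti : ∀ x ∈ (Set.range η ∪ {a : A | ∃ i j : Fin n, i ≠ j ∧ a = ω i j}),
             ∀ y ∈ (Set.range η ∪ {a : A | ∃ i j : Fin n, i ≠ j ∧ a = ω i j}),
             x * y = -(y * x))
    (hsq : ∀ x ∈ (Set.range η ∪ {a : A | ∃ i j : Fin n, i ≠ j ∧ a = ω i j}), x * x = 0)
    (hArnold : ∀ i j k : Fin n, i ≠ j → j ≠ k → i ≠ k →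
        ω i j * ω j k + ω j k * ω k i + ω k i * ω i j = 0)
    (α : Fin (n + 1) → Fin (n + 1) → A)
    (hα0 : ∀ i : Fin n, α 0 i.succ = η i ∧ α i.succ 0 = η i)
    (hαij : ∀ i j : Fin n, i ≠ j → α i.succ j.succ = η i + η j - 2 • ω i j)
    (ind : Fin 4 → Fin (n + 1)) (hind : Function.Injective ind) :
    ∑ σ ∈ Finset.univ.filter (fun σ : Equiv.Perm (Fin 4) => Equiv.Perm.sign σ = 1),
      α (ind (σ 0)) (ind (σ 1)) * α (ind (σ 1)) (ind (σ 2)) = 0 := by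
  have hmem_e : ∀ i : Fin n,
      η i ∈ (Set.range η ∪ {a : A | ∃ i j : Fin n, i ≠ j ∧ a = ω i j}) :=
    fun i => Set.mem_union_left _ ⟨i, rfl⟩
  have hmem_w : ∀ i j : Fin n, i ≠ j →
      ω i j ∈ (Set.range η ∪ {a : A | ∃ i j : Fin n, i ≠ j ∧ a = ω i j}) :=
    fun i j h => Set.mem_union_right _ ⟨i, j, h, rfl⟩
  have hee : ∀ i j : Fin n, η i * η j + η j * η i = 0 := fun i j => by
    rw [hanti _ (hmem_e i) _ (hmem_e j)]; exact neg_add_cancel _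
  have hew : ∀ i j k : Fin n, j ≠ k → η i * ω j k + ω j k * η i = 0 := fun i j k h => by
    rw [hanti _ (hmem_e i) _ (hmem_w j k h)]; exact neg_add_cancel _
  have hww : ∀ i j k l : Fin n, i ≠ j → k ≠ l → ω i j * ω k l + ω k l * ω i j = 0 :=
    fun i j k l h h' => by
      rw [hanti _ (hmem_w i j h) _ (hmem_w k l h')]; exact neg_add_cancel _
  have hsqe : ∀ i : Fin n, η i * η i = 0 := fun i => hsq _ (hmem_e i)
  have hR : ∀ i j k : Fin n, i ≠ j → j ≠ k → i ≠ k →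
      ω i j * ω j k + ω j k * ω i k + ω i k * ω i j = 0 := by
    intro i j k hij hjk hik
    have h := hArnold i j k hij hjk hik
    rwa [hωsymm k i hik.symm] at h
  have hαc : ∀ i j : Fin n, i ≠ j → α i.succ j.succ = η i + η j - (ω i j + ω i j) :=
    fun i j h => by rw [hαij i j h, two_nsmul]
  have hfil : Finset.univ.filter (fun σ : Equiv.Perm (Fin 4) => Equiv.Perm.sign σ = 1)
      = ({1, Equiv.swap 0 1 * Equiv.swap 2 3, Equiv.swap 0 2 * Equiv.swap 1 3,
          Equiv.swap 0 3 * Equiv.swap 1 2,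
          Equiv.swap 0 1 * Equiv.swap 1 2, Equiv.swap 0 2 * Equiv.swap 2 1,
          Equiv.swap 0 1 * Equiv.swap 1 3, Equiv.swap 0 3 * Equiv.swap 3 1,
          Equiv.swap 0 2 * Equiv.swap 2 3, Equiv.swap 0 3 * Equiv.swap 3 2,
          Equiv.swap 1 2 * Equiv.swap 2 3, Equiv.swap 1 3 * Equiv.swap 3 2} :
            Finset (Equiv.Perm (Fin 4))) := by
    decide
  rw [hfil, Finset.sum_insert (by decide), Finset.sum_insert (by decide),
      Finset.sum_insert (by decide), Finset.sum_insert (by decide),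
      Finset.sum_insert (by decide), Finset.sum_insert (by decide),
      Finset.sum_insert (by decide), Finset.sum_insert (by decide),
      Finset.sum_insert (by decide), Finset.sum_insert (by decide),
      Finset.sum_insert (by decide), Finset.sum_singleton]
  simp only [(by decide : ((1 : Equiv.Perm (Fin 4))) 0 = 0), (by decide : ((1 : Equiv.Perm (Fin 4))) 1 = 1), (by decide : ((1 : Equiv.Perm (Fin 4))) 2 = 2), (by decide : ((Equiv.swap 0 1 * Equiv.swap 2 3 : Equiv.Perm (Fin 4))) 0 = 1), (by decide : ((Equiv.swap 0 1 * Equiv.swap 2 3 : Equiv.Perm (Fin 4))) 1 = 0), (by decide : ((Equiv.swap 0 1 * Equiv.swap 2 3 : Equiv.Perm (Fin 4))) 2 = 3), (by decide : ((Equiv.swap 0 2 * Equiv.swap 1 3 : Equiv.Perm (Fin 4))) 0 = 2), (by decide : ((Equiv.swap 0 2 * Equiv.swap 1 3 : Equiv.Perm (Fin 4))) 1 = 3), (by decide : ((Equiv.swap 0 2 * Equiv.swap 1 3 : Equiv.Perm (Fin 4))) 2 = 0), (by decide : ((Equiv.swap 0 3 * Equiv.swap 1 2 : Equiv.Perm (Fin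 4))) 0 = 3), (by decide : ((Equiv.swap 0 3 * Equiv.swap 1 2 : Equiv.Perm (Fin 4))) 1 = 2), (by decide : ((Equiv.swap 0 3 * Equiv.swap 1 2 : Equiv.Perm (Fin 4))) 2 = 1), (by decide : ((Equiv.swap 0 1 * Equiv.swap 1 2 : Equiv.Perm (Fin 4))) 0 = 1), (by decide : ((Equiv.swap 0 1 * Equiv.swap 1 2 : Equiv.Perm (Fin 4))) 1 = 2), (by decide : ((Equiv.swap 0 1 * Equiv.swap 1 2 : Equiv.Perm (Fin 4))) 2 = 0), (by decide : ((Equiv.swap 0 2 * Equiv.swap 2 1 : Equiv.Perm (Fin 4))) 0 = 2), (by decide : ((Equiv.swap 0 2 * Equiv.swap 2 1 : Equiv.Perm (Fin 4))) 1 = 0), (by decide : ((Equiv.swap 0 2 * Equiv.swap 2 1 : Equiv.Perm (Fin 4))) 2 = 1), (by decide : ((Equiv.swap 0 1 * Equiv.swap 1 3 : Equiv.Perm (Fin 4))) 0 = 1), (by decide : ((Equiv.swap 0 1 * Equiv.swap 1 3 : Equiv.Perm (Fin 4))) 1 = 3), (by decide : ((Equiv.swap 0 1 * Equiv.swap 1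 3 : Equiv.Perm (Fin 4))) 2 = 2), (by decide : ((Equiv.swap 0 3 * Equiv.swap 3 1 : Equiv.Perm (Fin 4))) 0 = 3), (by decide : ((Equiv.swap 0 3 * Equiv.swap 3 1 : Equiv.Perm (Fin 4))) 1 = 0), (by decide : ((Equiv.swap 0 3 * Equiv.swap 3 1 : Equiv.Perm (Fin 4))) 2 = 2), (by decide : ((Equiv.swap 0 2 * Equiv.swap 2 3 : Equiv.Perm (Fin 4))) 0 = 2), (by decide : ((Equiv.swap 0 2 * Equiv.swap 2 3 : Equiv.Perm (Fin 4))) 1 = 1), (by decide : ((Equiv.swap 0 2 * Equiv.swap 2 3 : Equiv.Perm (Fin 4))) 2 = 3), (by decide : ((Equiv.swap 0 3 * Equiv.swap 3 2 : Equiv.Perm (Fin 4))) 0 = 3), (by decide : ((Equiv.swap 0 3 * Equiv.swap 3 2 : Equiv.Perm (Fin 4))) 1 = 1), (by decide : ((Equiv.swap 0 3 * Equiv.swap 3 2 : Equiv.Perm (Fin 4))) 2 = 0), (by decide : ((Equiv.swap 1 2 * Equiv.swap 2 3 : Equiv.Perm (Fin 4))) 0 = 0), (by decide : ((Equiv.swap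 1 2 * Equiv.swap 2 3 : Equiv.Perm (Fin 4))) 1 = 2), (by decide : ((Equiv.swap 1 2 * Equiv.swap 2 3 : Equiv.Perm (Fin 4))) 2 = 3), (by decide : ((Equiv.swap 1 3 * Equiv.swap 3 2 : Equiv.Perm (Fin 4))) 0 = 0), (by decide : ((Equiv.swap 1 3 * Equiv.swap 3 2 : Equiv.Perm (Fin 4))) 1 = 3), (by decide : ((Equiv.swap 1 3 * Equiv.swap 3 2 : Equiv.Perm (Fin 4))) 2 = 1)]
  have d01 : ind 0 ≠ ind 1 := hind.ne (by decide)
  have d02 : ind 0 ≠ ind 2 := hind.ne (by decide)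
  have d03 : ind 0 ≠ ind 3 := hind.ne (by decide)
  have d12 : ind 1 ≠ ind 2 := hind.ne (by decide)
  have d13 : ind 1 ≠ ind 3 := hind.ne (by decide)
  have d23 : ind 2 ≠ ind 3 := hind.ne (by decide)
  by_cases hz0 : ind 0 = 0
  · have h1 : ind 1 ≠ 0 := by rw [← hz0]; exact d01.symm
    have h2 : ind 2 ≠ 0 := by rw [← hz0]; exact d02.symm
    have h3 : ind 3 ≠ 0 := by rw [← hz0]; exact d03.symm
    obtain ⟨a, ha⟩ := Fin.eq_succ_of_ne_zero h1
    obtain ⟨b, hb⟩ := Fin.eq_succ_of_ne_zero h2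
    obtain ⟨c, hc⟩ := Fin.eq_succ_of_ne_zero h3
    have hab : a ≠ b := fun h => d12 (by rw [ha, hb, h])
    have hac : a ≠ c := fun h => d13 (by rw [ha, hc, h])
    have hbc : b ≠ c := fun h => d23 (by rw [hb, hc, h])
    rw [hz0, ha, hb, hc]
    simp only [(hα0 a).1, (hα0 a).2, (hα0 b).1, (hα0 b).2, (hα0 c).1, (hα0 c).2, hαc a b hab, hαc a c hac, hαc b a hab.symm, hαc b c hbc, hαc c a hac.symm, hαc c b hbc.symm, hωsymm b a hab.symm, hωsymm c a hac.symm, hωsymm c b hbc.symm]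
    linear_combination (norm := noncomm_ring) -(4) * hR a b c hab hbc hac + (3) * hee a b - (2) * hew a a b hab + (3) * hee a c + (3) * hee b c - (2) * hew c b c hbc - (2) * hew c a b hab - (2) * hew b a b hab - (2) * hew b b c hbc - (2) * hew a b c hbc + (4) * hww a b b c hab hbc - (2) * hew c a c hac - (2) * hew b a c hac + (4) * hww a c b c hac hbc - (2) * hew a a c hac + (4) * hww a b a c hab hac + (3) * hsqe a + (3) * hsqe c + (3) * hsqe b
  · by_cases hz1 : ind 1 = 0
    · have h0 : ind 0 ≠ 0 := hz0
      have h2 : ind 2 ≠ 0 := by rw [← hz1]; exact d12.symm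
      have h3 : ind 3 ≠ 0 := by rw [← hz1]; exact d13.symm
      obtain ⟨a, ha⟩ := Fin.eq_succ_of_ne_zero h0
      obtain ⟨b, hb⟩ := Fin.eq_succ_of_ne_zero h2
      obtain ⟨c, hc⟩ := Fin.eq_succ_of_ne_zero h3
      have hab : a ≠ b := fun h => d02 (by rw [ha, hb, h])
      have hac : a ≠ c := fun h => d03 (by rw [ha, hc, h])
      have hbc : b ≠ c := fun h => d23 (by rw [hb, hc, h])
      rw [hz1, ha, hb, hc]
      simp only [(hα0 a).1, (hα0 a).2, (hα0 b).1, (hα0 b).2, (hα0 c).1, (hα0 c).2, hαc a b hab, hαc a c hac, hαc b a hab.symm, hαc b c hbc, hαc c a hac.symm, hαc c b hbc.symm, hωsymm b a hab.symm, hωsymm c a hac.symm, hωsymm c b hbc.symm]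
      linear_combination (norm := noncomm_ring) (4) * hR a b c hab hbc hac + (3) * hee a b + (3) * hee a c - (2) * hew a a c hac + (3) * hee b c - (2) * hew b a c hac - (2) * hew c a c hac - (2) * hew c b c hbc - (2) * hew a b c hbc - (2) * hew b b c hbc - (2) * hew b a b hab - (2) * hew a a b hab - (2) * hew c a b hab + (3) * hsqe a + (3) * hsqe c + (3) * hsqe b
    · by_cases hz2 : ind 2 = 0
      · have h0 : ind 0 ≠ 0 := hz0
        have h1 : ind 1 ≠ 0 := hz1
        have h3 : ind 3 ≠ 0 := by rw [← hz2]; exact d23.symm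
        obtain ⟨a, ha⟩ := Fin.eq_succ_of_ne_zero h0
        obtain ⟨b, hb⟩ := Fin.eq_succ_of_ne_zero h1
        obtain ⟨c, hc⟩ := Fin.eq_succ_of_ne_zero h3
        have hab : a ≠ b := fun h => d01 (by rw [ha, hb, h])
        have hac : a ≠ c := fun h => d03 (by rw [ha, hc, h])
        have hbc : b ≠ c := fun h => d13 (by rw [hb, hc, h])
        rw [hz2, ha, hb, hc]
        simp only [(hα0 a).1, (hα0 a).2, (hα0 b).1, (hα0 b).2, (hα0 c).1, (hα0 c).2, hαc a b hab, hαc a c hac, hαc b a hab.symm, hαc b c hbc, hαc c a hac.symm, hαc c b hbc.symm, hωsymm b a hab.symm, hωsymm c a hac.symm, hωsymm c b hbc.symm]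
        linear_combination (norm := noncomm_ring) -(4) * hR a b c hab hbc hac + (3) * hee a b - (2) * hew b a b hab + (3) * hee b c - (2) * hew b a c hac + (3) * hee a c - (2) * hew a a c hac - (2) * hew a a b hab - (2) * hew c a b hab + (4) * hww a b a c hab hac - (2) * hew c a c hac - (2) * hew c b c hbc - (2) * hew b b c hbc - (2) * hew a b c hbc + (4) * hww a b b c hab hbc + (4) * hww a c b c hac hbc + (3) * hsqe b + (3) * hsqe a + (3) * hsqe c
      · by_cases hz3 : ind 3 = 0
        · have h0 : ind 0 ≠ 0 := hz0
          have h1 : ind 1 ≠ 0 := hz1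
          have h2 : ind 2 ≠ 0 := hz2
          obtain ⟨a, ha⟩ := Fin.eq_succ_of_ne_zero h0
          obtain ⟨b, hb⟩ := Fin.eq_succ_of_ne_zero h1
          obtain ⟨c, hc⟩ := Fin.eq_succ_of_ne_zero h2
          have hab : a ≠ b := fun h => d01 (by rw [ha, hb, h])
          have hac : a ≠ c := fun h => d02 (by rw [ha, hc, h])
          have hbc : b ≠ c := fun h => d12 (by rw [hb, hc, h])
          rw [hz3, ha, hb, hc]
          simp only [(hα0 a).1, (hα0 a).2, (hα0 b).1, (hα0 b).2, (hα0 c).1, (hα0 c).2, hαc a b hab, hαc a c hac, hαc b a hab.symm, hαc b c hbc, hαc c a hac.symm, hαc c b hbc.symm, hωsymm b a hab.symm, hωsymm c a hac.symm, hωsymm c b hbc.symm]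
          linear_combination (norm := noncomm_ring) (4) * hR a b c hab hbc hac + (3) * hee a b + (3) * hee a c - (2) * hew a b c hbc + (3) * hee b c - (2) * hew b b c hbc - (2) * hew b a b hab - (2) * hew c a b hab - (2) * hew a a b hab - (2) * hew c b c hbc - (2) * hew b a c hac - (2) * hew c a c hac - (2) * hew a a c hac + (3) * hsqe b + (3) * hsqe a + (3) * hsqe c
        · have h0 : ind 0 ≠ 0 := hz0
          have h1 : ind 1 ≠ 0 := hz1
          have h2 : ind 2 ≠ 0 := hz2
          have h3 : ind 3 ≠ 0 := hz3
          obtain ⟨a, ha⟩ := Fin.eq_succ_of_ne_zero h0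
          obtain ⟨b, hb⟩ := Fin.eq_succ_of_ne_zero h1
          obtain ⟨c, hc⟩ := Fin.eq_succ_of_ne_zero h2
          obtain ⟨d, hd⟩ := Fin.eq_succ_of_ne_zero h3
          have hab : a ≠ b := fun h => d01 (by rw [ha, hb, h])
          have hac : a ≠ c := fun h => d02 (by rw [ha, hc, h])
          have had : a ≠ d := fun h => d03 (by rw [ha, hd, h])
          have hbc : b ≠ c := fun h => d12 (by rw [hb, hc, h])
          have hbd : b ≠ d := fun h => d13 (by rw [hb, hd, h])
          have hcd : c ≠ d := fun h => d23 (by rw [hc, hd, h])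
          rw [ha, hb, hc, hd]
          simp only [hαc a b hab, hαc a c hac, hαc a d had, hαc b a hab.symm, hαc b c hbc, hαc b d hbd, hαc c a hac.symm, hαc c b hbc.symm, hαc c d hcd, hαc d a had.symm, hαc d b hbd.symm, hαc d c hcd.symm, hωsymm b a hab.symm, hωsymm c a hac.symm, hωsymm c b hbc.symm, hωsymm d a had.symm, hωsymm d b hbd.symm, hωsymm d c hcd.symm]
          linear_combination (norm := noncomm_ring) (4) * hR a b c hab hbc hac - (4) * hR a b d hab hbd had + (4) * hR a c d hac hcd had - (4) * hR b c d hbc hcd hbd + (3) * hee a b + (3) * hee a c - (2) * hew a b c hbc + (3) * hee b c - (2) * hew b b c hbc - (2) * hew b a b hab - (2) * hew c a b hab + (3) * hee b d - (2) * hew b a d had + (3) * hee a d - (2) * hew a a d had - (2) * hew a a b hab - (2) * hew d a b hab + (4) * hww a b a d hab had + (3) * hee c d - (2) * hew c a d had - (2) * hew d a d had - (2) * hew d c d hcd - (2) * hew a c d hcd - (2) * hew d b c hbc - (2) * hew c b c hbc - (2) * hew c c d hcd - (2) * hew b c d hcd + (4) * hww b c c d hbc hcd - (2) * hew b a c hac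 - (2) * hew c a c hac - (2) * hew a a c hac - (2) * hew d b d hbd - (2) * hew c b d hbd + (4) * hww b d c d hbd hcd - (2) * hew d a c hac - (2) * hew b b d hbd + (4) * hww b c b d hbc hbd - (2) * hew a b d hbd + (4) * hww a b b d hab hbd + (4) * hww a d b d had hbd + (3) * hsqe b + (3) * hsqe a + (3) * hsqe d + (3) * hsqe c
end

section
/- For every triple of distinct indices i, j, k ∈ {1, …, n}, the Arnold relation rewritten in terms of the α classes holds: α_{ij}α_{jk} + α_{jk}α_{ki} + α_{ki}α_{ij} + α_{i0}α_{0j} + α_{j0}α_{0k} + α_{k0}α_{0i} + α_{kj}α_{j0} + α_{ik}α_{k0} + α_{ji}α_{i0} + α_{0j}α_{ji} + α_{0k}α_{kj} + α_{0i}α_{ik} = 0. -/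
/-- **The Arnold relation rewritten in the cyclic generators.**  Fix `n ≥ 3` and an
associative unital `ℝ`-algebra `A` containing elements `η i` (`1 ≤ i ≤ n`, encoded as
`i : Fin n`) and `ω i j = ω j i` (`i ≠ j`) such that any two members of the family
`{η i} ∪ {ω i j}` anticommute and each squares to zero, and satisfying the Arnold
relations.  Define `α 0 (i+1) = α (i+1) 0 = η i` and `α (i+1) (j+1) = η i + η j - 2 ω i j`
(the cyclic generators of `H^*(𝓜_{n+1};ℝ)`).  Then for every triple of distinct indices
`i, j, k` one has
`α_{ij}α_{jk} + α_{jk}α_{ki} + α_{ki}α_{ij} + α_{i0}α_{0j} + α_{j0}α_{0k} + α_{k0}α_{0i}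
 + α_{kj}α_{j0} + α_{ik}α_{k0} + α_{ji}α_{i0} + α_{0j}α_{ji} + α_{0k}α_{kj} + α_{0i}α_{ik} = 0`. -/
theorem arnold_relation_in_cyclic_generators
    (n : ℕ) (hn : 3 ≤ n) (A : Type*) [Ring A] [Algebra ℝ A]
    (η : Fin n → A) (ω : Fin n → Fin n → A)
    (hωsymm : ∀ i j : Fin n, i ≠ j → ω i j = ω j i)
    (hanti : ∀ x ∈ (Set.range η ∪ {a : A | ∃ i j : Fin n, i ≠ j ∧ a = ω i j}),
             ∀ y ∈ (Set.range η ∪ {a : A | ∃ i j : Fin n, i ≠ j ∧ a = ω i j}),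
             x * y = -(y * x))
    (hsq : ∀ x ∈ (Set.range η ∪ {a : A | ∃ i j : Fin n, i ≠ j ∧ a = ω i j}), x * x = 0)
    (hArnold : ∀ i j k : Fin n, i ≠ j → j ≠ k → i ≠ k →
        ω i j * ω j k + ω j k * ω k i + ω k i * ω i j = 0)
    (α : Fin (n + 1) → Fin (n + 1) → A)
    (hα0 : ∀ i : Fin n, α 0 i.succ = η i ∧ α i.succ 0 = η i)
    (hαij : ∀ i j : Fin n, i ≠ j → α i.succ j.succ = η i + η j - 2 • ω i j)
    (i j k : Fin n) (hij : i ≠ j) (hjk : j ≠ k) (hik : i ≠ k) :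
      α i.succ j.succ * α j.succ k.succ
    + α j.succ k.succ * α k.succ i.succ
    + α k.succ i.succ * α i.succ j.succ
    + α i.succ 0 * α 0 j.succ
    + α j.succ 0 * α 0 k.succ
    + α k.succ 0 * α 0 i.succ
    + α k.succ j.succ * α j.succ 0
    + α i.succ k.succ * α k.succ 0
    + α j.succ i.succ * α i.succ 0
    + α 0 j.succ * α j.succ i.succ
    + α 0 k.succ * α k.succ j.succ
    + α 0 i.succ * α i.succ k.succ = 0 := by

  set a := η i with ha
  set b := η j with hb
  set c := η k with hc
  set u := ω i j with hu
  set v := ω j k with hv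
  set w := ω k i with hw
  have mema : a ∈ (Set.range η ∪ {x : A | ∃ i j : Fin n, i ≠ j ∧ x = ω i j}) := Or.inl ⟨i, rfl⟩
  have memb : b ∈ (Set.range η ∪ {x : A | ∃ i j : Fin n, i ≠ j ∧ x = ω i j}) := Or.inl ⟨j, rfl⟩
  have memc : c ∈ (Set.range η ∪ {x : A | ∃ i j : Fin n, i ≠ j ∧ x = ω i j}) := Or.inl ⟨k, rfl⟩
  have memu : u ∈ (Set.range η ∪ {x : A | ∃ i j : Fin n, i ≠ j ∧ x = ω i j}) := Or.inr ⟨i, j, hij, rfl⟩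
  have memv : v ∈ (Set.range η ∪ {x : A | ∃ i j : Fin n, i ≠ j ∧ x = ω i j}) := Or.inr ⟨j, k, hjk, rfl⟩
  have memw : w ∈ (Set.range η ∪ {x : A | ∃ i j : Fin n, i ≠ j ∧ x = ω i j}) := Or.inr ⟨k, i, (Ne.symm hik), rfl⟩
  have hab := hanti a mema b memb
  have hac := hanti a mema c memc
  have hbc := hanti b memb c memc
  have hau := hanti a mema u memu
  have hav := hanti a mema v memv
  have haw := hanti a mema w memw
  have hbu := hanti b memb u memu
  have hbv := hanti b memb v memv
  have hbw := hanti b memb w memw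
  have hcu := hanti c memc u memu
  have hcv := hanti c memc v memv
  have hcw := hanti c memc w memw
  have hsa := hsq a mema
  have hsb := hsq b memb
  have hsc := hsq c memc
  have hA : u * v + v * w + w * u = 0 := hArnold i j k hij hjk hik
  have e1 : α i.succ j.succ = a + b - 2 • u := hαij i j hij
  have e2 : α j.succ k.succ = b + c - 2 • v := hαij j k hjk
  have e3 : α k.succ i.succ = c + a - 2 • w := hαij k i (Ne.symm hik)
  have e4 : α i.succ k.succ = a + c - 2 • w := by
    rw [hαij i k hik, hωsymm i k hik]
  have e0i : α 0 i.succ = a := (hα0 i).1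
  have ei0 : α i.succ 0 = a := (hα0 i).2
  have e0j : α 0 j.succ = b := (hα0 j).1
  have ej0 : α j.succ 0 = b := (hα0 j).2
  have e0k : α 0 k.succ = c := (hα0 k).1
  have ek0 : α k.succ 0 = c := (hα0 k).2
  have e5 : α k.succ j.succ = b + c - 2 • v := by
    rw [hαij k j (Ne.symm hjk), hωsymm k j (Ne.symm hjk)]; noncomm_ring
  have e6 : α j.succ i.succ = a + b - 2 • u := by
    rw [hαij j i (Ne.symm hij), hωsymm j i (Ne.symm hij)]; noncomm_ring
  rw [e1, e2, e3, e4, e5, e6, e0i, ei0, e0j, ej0, e0k, ek0]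
  linear_combination (norm := noncomm_ring)
    3 * hab + 3 * hac + 3 * hbc
    - 2 * hau - 2 * hav - 2 * haw
    - 2 * hbu - 2 * hbv - 2 * hbw
    - 2 * hcu - 2 * hcv - 2 * hcw
    + 3 * hsa + 3 * hsb + 3 * hsc + 4 * hA
end

section
/- For every triple of distinct indices i, j, k ∈ {1, …, n}, the elements ω_{ij} satisfy the Arnold relation: ω_{ij}·ω_{jk} + ω_{jk}·ω_{ki} + ω_{ki}·ω_{ij} = 0. -/
private def g12 : Fin 12 → Equiv.Perm (Fin 4) :=
  ![1, Equiv.swap 0 1 * Equiv.swap 1 2, Equiv.swap 0 2 * Equiv.swap 2 1,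
    Equiv.swap 0 1 * Equiv.swap 1 3, Equiv.swap 0 3 * Equiv.swap 3 1,
    Equiv.swap 0 2 * Equiv.swap 2 3, Equiv.swap 0 3 * Equiv.swap 3 2,
    Equiv.swap 1 2 * Equiv.swap 2 3, Equiv.swap 1 3 * Equiv.swap 3 2,
    Equiv.swap 0 1 * Equiv.swap 2 3, Equiv.swap 0 2 * Equiv.swap 1 3,
    Equiv.swap 0 3 * Equiv.swap 1 2]

private lemma A4sum {M : Type*} [AddCommMonoid M] (f : Equiv.Perm (Fin 4) → M) :
    ∑ σ ∈ Finset.univ.filter (fun σ : Equiv.Perm (Fin 4) => Equiv.Perm.sign σ = 1), f σ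
      = ∑ t : Fin 12, f (g12 t) := by
  rw [show (Finset.univ.filter (fun σ : Equiv.Perm (Fin 4) => Equiv.Perm.sign σ = 1))
      = (Finset.univ : Finset (Fin 12)).image g12 from by decide,
    Finset.sum_image (by decide)]

/-- **The Arnold relation follows from the cyclic Arnold relations.**  Fix `n ≥ 3` and an
associative unital `ℝ`-algebra `A` containing elements `α i j = α j i`
(`0 ≤ i ≠ j ≤ n`, encoded by `i j : Fin (n+1)`) such that any two of them anticommute and
each squares to zero, and satisfying the cyclic Arnold relations: for every 4-tuple of
distinct indices `ind : Fin 4 → Fin (n+1)`,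
`∑_{σ ∈ A₄} α (ind σ(1)) (ind σ(2)) * α (ind σ(2)) (ind σ(3)) = 0`, the sum being over
the alternating group on four letters (permutations of sign `1`).  Define
`ω i j = (1/2)(α 0 i + α 0 j - α i j)` for nonzero `i ≠ j`.  Then the `ω i j` satisfy the
Arnold relation `ω i j * ω j k + ω j k * ω k i + ω k i * ω i j = 0` for all triples of
distinct nonzero indices. -/
theorem arnold_relation_from_cyclic
    (n : ℕ) (hn : 3 ≤ n) (A : Type*) [Ring A] [Algebra ℝ A]
    (α : Fin (n + 1) → Fin (n + 1) → A)
    (hαsymm : ∀ i j : Fin (n + 1), i ≠ j → α i j = α j i)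
    (hanti : ∀ x ∈ {a : A | ∃ i j : Fin (n + 1), i ≠ j ∧ a = α i j},
             ∀ y ∈ {a : A | ∃ i j : Fin (n + 1), i ≠ j ∧ a = α i j},
             x * y = -(y * x))
    (hsq : ∀ x ∈ {a : A | ∃ i j : Fin (n + 1), i ≠ j ∧ a = α i j}, x * x = 0)
    (hcyc : ∀ ind : Fin 4 → Fin (n + 1), Function.Injective ind →
        ∑ σ ∈ Finset.univ.filter (fun σ : Equiv.Perm (Fin 4) => Equiv.Perm.sign σ = 1),
          α (ind (σ 0)) (ind (σ 1)) * α (ind (σ 1)) (ind (σ 2)) = 0)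
    (ω : Fin (n + 1) → Fin (n + 1) → A)
    (hω : ∀ i j : Fin (n + 1), i ≠ 0 → j ≠ 0 → i ≠ j →
        ω i j = (1 / 2 : ℝ) • (α 0 i + α 0 j - α i j))
    (i j k : Fin (n + 1)) (hi : i ≠ 0) (hj : j ≠ 0) (hk : k ≠ 0)
    (hij : i ≠ j) (hjk : j ≠ k) (hik : i ≠ k) :
    ω i j * ω j k + ω j k * ω k i + ω k i * ω i j = 0 := by
  set a := α 0 i with ha
  set b := α 0 j with hb
  set c := α 0 k with hc0
  set d := α i j with hd
  set e := α j k with he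
  set f := α i k with hf
  have ma : a ∈ {x : A | ∃ p q : Fin (n + 1), p ≠ q ∧ x = α p q} := ⟨0, i, Ne.symm hi, rfl⟩
  have mb : b ∈ {x : A | ∃ p q : Fin (n + 1), p ≠ q ∧ x = α p q} := ⟨0, j, Ne.symm hj, rfl⟩
  have mc : c ∈ {x : A | ∃ p q : Fin (n + 1), p ≠ q ∧ x = α p q} := ⟨0, k, Ne.symm hk, rfl⟩
  have md : d ∈ {x : A | ∃ p q : Fin (n + 1), p ≠ q ∧ x = α p q} := ⟨i, j, hij, rfl⟩
  have me : e ∈ {x : A | ∃ p q : Fin (n + 1), p ≠ q ∧ x = α p q} := ⟨j, k, hjk, rfl⟩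
  have mf : f ∈ {x : A | ∃ p q : Fin (n + 1), p ≠ q ∧ x = α p q} := ⟨i, k, hik, rfl⟩
  have PB : ∀ x ∈ {x : A | ∃ p q : Fin (n + 1), p ≠ q ∧ x = α p q},
      ∀ y ∈ {x : A | ∃ p q : Fin (n + 1), p ≠ q ∧ x = α p q}, x * y + y * x = 0 := by
    intro x hx y hy
    rw [hanti x hx y hy]
    exact neg_add_cancel _
  -- the cyclic relation for the 4-tuple (0, i, j, k)
  have hinj : Function.Injective ![0, i, j, k] := by
    intro x y hxy
    fin_cases x <;> fin_cases y <;>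
      simp only [Matrix.cons_val_zero, Matrix.cons_val_one, Matrix.head_cons,
        Matrix.cons_val_two, Matrix.tail_cons, Matrix.cons_val_three,
        Matrix.cons_val_fin_one, Fin.mk_one, Fin.isValue] at hxy ⊢ <;>
      first
      | rfl
      | exact absurd hxy (by assumption)
      | exact absurd hxy.symm (by assumption)
  have hC := hcyc ![0, i, j, k] hinj
  rw [A4sum] at hC
  simp (config := { decide := true })
    [Fin.sum_univ_succ, g12, Equiv.swap_apply_def, Fin.ext_iff] at hC
  rw [hαsymm j 0 hj, hαsymm i 0 hi, hαsymm k 0 hk, hαsymm k j (Ne.symm hjk),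
    hαsymm j i (Ne.symm hij), hαsymm k i (Ne.symm hik)] at hC
  rw [← ha, ← hb, ← hc0, ← hd, ← he, ← hf] at hC
  -- now hC : a*d + (d*b + (b*a + (f*e + (c*b + (d*f + (f*a + (b*e + (c*f + (a*c +
  --   (e*c + e*d)))))))))) = 0
  have hS : (a + b - d) * (b + c - e) + (b + c - e) * (c + a - f)
      + (c + a - f) * (a + b - d) = 0 := by
    have key : (a + b - d) * (b + c - e) + (b + c - e) * (c + a - f)
        + (c + a - f) * (a + b - d)
        = b * b + c * c + a * a + 2 * (a * b + b * a) + 2 * (a * c + c * a)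
          - (a * e + e * a) + 2 * (b * c + c * b) - (c * d + d * c) + (d * e + e * d)
          - (b * f + f * b) + (e * f + f * e) + (d * f + f * d)
          - (a * d + (d * b + (b * a + (f * e + (c * b + (d * f + (f * a + (b * e
            + (c * f + (a * c + (e * c + e * d))))))))))) := by
      noncomm_ring
    rw [key, hC, sub_zero, hsq a ma, hsq b mb, hsq c mc, PB a ma b mb, PB a ma c mc,
      PB a ma e me, PB b mb c mc, PB c mc d md, PB d md e me, PB b mb f mf,
      PB e me f mf, PB d md f mf]
    norm_num
  rw [hω i j hi hj hij, hω j k hj hk hjk, hω k i hk hi (Ne.symm hik),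
    hαsymm k i (Ne.symm hik), ← ha, ← hb, ← hc0, ← hd, ← he, ← hf]
  have hsm : ∀ x y : A, ((1 / 2 : ℝ) • x) * ((1 / 2 : ℝ) • y) = (1 / 4 : ℝ) • (x * y) := by
    intro x y
    rw [smul_mul_assoc, mul_smul_comm, smul_smul]
    norm_num
  rw [hsm, hsm, hsm, ← smul_add, ← smul_add, hS, smul_zero]
end

section
/- For every k ≥ 0: Σ_{i=0}^{k} (−1)^i Π_{j≠i} (x + z_j) = Σ_{i=0}^{k} (−1)^i Π_{j≠i} z_j, where Π_{j≠i} denotes the product over j ∈ {0, …, k} ∖ {i} taken in increasing order of j. Equivalently, the coefficient of x in the left-hand side vanishes. -/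
section Pinwheel

variable {A : Type*} [Ring A] [Algebra ℝ A]

/-- The alternating sum `∑ i (-1)^i • (l with i-th entry removed).prod`. -/
private def altSum (l : List A) : A :=
  ∑ i ∈ Finset.range l.length, ((-1 : ℝ) ^ i) • (l.eraseIdx i).prod

private lemma altSum_nil : altSum ([] : List A) = 0 := by simp [altSum]

private lemma altSum_append (l : List A) (a : A) :
    altSum (l ++ [a]) = altSum l * a + ((-1 : ℝ) ^ l.length) • l.prod := by
  unfold altSum
  rw [List.length_append, List.length_singleton, Finset.sum_range_succ]
  congr 1
  · rw [Finset.sum_mul]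
    refine Finset.sum_congr rfl fun i hi => ?_
    rw [Finset.mem_range] at hi
    rw [List.eraseIdx_append_of_lt_length hi, List.prod_append, List.prod_singleton,
      smul_mul_assoc]
  · rw [List.eraseIdx_append_of_length_le le_rfl, Nat.sub_self]
    simp

/-- Move `x` across a product of elements that all anticommute with `x`. -/
private lemma x_mul_prod (x : A) (l : List A) (h : ∀ a ∈ l, x * a = -(a * x)) :
    x * l.prod = ((-1 : ℝ) ^ l.length) • (l.prod * x) := by
  induction l with
  | nil => simp
  | cons a l ih =>
      have ha := h a (List.mem_cons_self (a := a) (l := l))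
      have hl := fun b hb => h b (List.mem_cons_of_mem a hb)
      rw [List.prod_cons, ← mul_assoc, ha, neg_mul, mul_assoc, ih hl, List.length_cons,
        pow_succ]
      rw [mul_smul_comm]
      rw [mul_comm ((-1 : ℝ) ^ l.length) (-1 : ℝ), mul_smul, neg_one_smul, mul_assoc]

private lemma prod_mul_x (x : A) (l : List A) (h : ∀ a ∈ l, x * a = -(a * x)) :
    l.prod * x = ((-1 : ℝ) ^ l.length) • (x * l.prod) := by
  rw [x_mul_prod x l h, smul_smul, ← mul_pow, neg_mul_neg, one_mul, one_pow, one_smul]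

/-- Move `x` across `altSum l`. -/
private lemma altSum_mul_x (x : A) (l : List A) (h : ∀ a ∈ l, x * a = -(a * x)) :
    altSum l * x = ((-1 : ℝ) ^ (l.length - 1)) • (x * altSum l) := by
  unfold altSum
  rw [Finset.sum_mul, Finset.mul_sum, Finset.smul_sum]
  refine Finset.sum_congr rfl fun i hi => ?_
  rw [Finset.mem_range] at hi
  have hlen : (l.eraseIdx i).length = l.length - 1 := by
    rw [List.length_eraseIdx, if_pos hi]
  have hmem : ∀ a ∈ l.eraseIdx i, x * a = -(a * x) :=
    fun a ha => h a (List.mem_of_mem_eraseIdx ha)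
  rw [smul_mul_assoc, prod_mul_x x _ hmem, hlen, mul_smul_comm, smul_comm]

/-- Expansion of the product of `x + aⱼ`: constant term plus `x`-linear term. -/
private lemma prod_add_eq (x : A) (hx : x * x = 0) (l : List A)
    (hxa : ∀ a ∈ l, x * a = -(a * x)) :
    (l.map (x + ·)).prod = l.prod + x * altSum l := by
  induction l using List.reverseRecOn with
  | nil => simp [altSum_nil]
  | append_singleton l a ih =>
      have hxl : ∀ b ∈ l, x * b = -(b * x) :=
        fun b hb => hxa b (List.mem_append_left _ hb)
      rw [List.map_append, List.map_singleton, List.prod_append, List.prod_singleton,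
        ih hxl, altSum_append, List.prod_append, List.prod_singleton]
      have h1 : l.prod * x = ((-1 : ℝ) ^ l.length) • (x * l.prod) := prod_mul_x x l hxl
      have h2 : x * altSum l * x = 0 := by
        rw [mul_assoc, altSum_mul_x x l hxl, mul_smul_comm, ← mul_assoc, hx, zero_mul,
          smul_zero]
      rw [add_mul, mul_add, mul_add, h1, h2, mul_add, mul_smul_comm, ← mul_assoc]
      abel

/-- The main list-level identity. -/
private lemma altSum_map_add (x : A) (hx : x * x = 0) (l : List A)
    (hxa : ∀ a ∈ l, x * a = -(a * x)) :
    altSum (l.map (x + ·)) = altSum l := by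
  induction l using List.reverseRecOn with
  | nil => simp
  | append_singleton l a ih =>
      have hxl : ∀ b ∈ l, x * b = -(b * x) :=
        fun b hb => hxa b (List.mem_append_left _ hb)
      have hxa' : x * a = -(a * x) := hxa a (List.mem_append_right _ (List.mem_singleton_self a))
      rw [List.map_append, List.map_singleton, altSum_append, altSum_append,
        ih hxl, List.length_map, prod_add_eq x hx l hxl]
      -- goal: altSum l * (x + a) + (-1)^len • (l.prod + x * altSum l)
      --     = altSum l * a + (-1)^len • l.prod
      rw [mul_add, smul_add, altSum_mul_x x l hxl]
      rcases List.eq_nil_or_concat l with rfl | ⟨l', b, rfl⟩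
      · simp [altSum_nil]
      · have hlen : (l'.concat b).length = l'.length + 1 := by simp
        rw [hlen]
        simp only [Nat.add_sub_cancel, pow_succ, mul_neg_one, neg_smul]
        abel

end Pinwheel

/-- **Vanishing of the coefficient of `x` in the alternating pinwheel sum.**  Let `A` be an
associative unital `ℝ`-algebra and let `x, z_0, …, z_k ∈ A` be elements such that any two
of them anticommute (`u*v = -(v*u)`) and each squares to zero.  Then for every `k ≥ 0`:
`∑_{i=0}^k (-1)^i ∏_{j ≠ i} (x + z_j) = ∑_{i=0}^k (-1)^i ∏_{j ≠ i} z_j`,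
where `∏_{j ≠ i}` is the product over `j ∈ {0, …, k} ∖ {i}` taken in increasing order of
`j`; equivalently, the coefficient of `x` on the left-hand side vanishes.  (This is the
algebraic identity underlying the proof that the pinwheel ideal lies in the kernel of the
Kontsevich integral.) -/
theorem pinwheel_coefficient_vanishes
    (A : Type*) [Ring A] [Algebra ℝ A] (k : ℕ) (x : A) (z : Fin (k + 1) → A)
    (hanti : ∀ u ∈ insert x (Set.range z), ∀ v ∈ insert x (Set.range z),
        u * v = -(v * u))
    (hsq : ∀ u ∈ insert x (Set.range z), u * u = 0) :
    ∑ i : Fin (k + 1), ((-1 : ℝ) ^ (i : ℕ)) •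
        ((List.ofFn (fun j : Fin (k + 1) => x + z j)).eraseIdx i).prod
      = ∑ i : Fin (k + 1), ((-1 : ℝ) ^ (i : ℕ)) • ((List.ofFn z).eraseIdx i).prod := by
  have hx : x * x = 0 := hsq x (Set.mem_insert _ _)
  have hxa : ∀ a ∈ List.ofFn z, x * a = -(a * x) := by
    intro a ha
    rw [List.mem_ofFn] at ha
    exact hanti x (Set.mem_insert _ _) a (Set.mem_insert_of_mem _ ha)
  have key := altSum_map_add x hx (List.ofFn z) hxa
  rw [List.map_ofFn] at key
  have h1 : ∀ (w : Fin (k+1) → A),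
      (∑ i : Fin (k + 1), ((-1 : ℝ) ^ (i : ℕ)) • ((List.ofFn w).eraseIdx i).prod)
        = altSum (List.ofFn w) := by
    intro w
    unfold altSum
    rw [List.length_ofFn]
    exact Fin.sum_univ_eq_sum_range (fun i => ((-1 : ℝ) ^ i) • ((List.ofFn w).eraseIdx i).prod) _
  rw [h1, h1, ← key]
  rfl
end

section
/- A_a·A_b·A_c·e = (1/4)·(B_a B_b − B_a B_c + B_b B_c)·(A_a e + A_b e + 2 A_c e). -/
lemma swap_assoc' {A : Type*} [Ring A] {x y : A} (h : y * x = -(x * y)) (t : A) :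
    y * (x * t) = -(x * (y * t)) := by
  rw [← mul_assoc, h, neg_mul, mul_assoc]

lemma sq_assoc' {A : Type*} [Ring A] {x : A} (h : x * x = 0) (t : A) : x * (x * t) = 0 := by
  rw [← mul_assoc, h, zero_mul]

/-- **The plus-graph boundary identity.**  Let `A` be an associative unital `ℝ`-algebra and
let `Aa, Ab, Ac, Ba, Bb, Bc, e ∈ A` be elements such that any two of them anticommute
(`x*y = -(y*x)`), each squares to zero, and `A_x - A_y = B_x - B_y` for all
`x, y ∈ {a, b, c}`.  Then
`Aa * Ab * Ac * e = (1/4) (Ba Bb - Ba Bc + Bb Bc) (Aa e + Ab e + 2 Ac e)`.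
(This encodes the identity
`α_{va}α_{vb}α_{vc}α_{dv} = (1/4)(α_{da}α_{db} - α_{da}α_{dc} + α_{db}α_{dc})
(α_{va}α_{dv} + α_{vb}α_{dv} + 2α_{vc}α_{dv})` of 1-forms on `∂_{dv}`, with
`A_x = α_{vx}`, `B_x = α_{dx}`, `e = α_{dv}`.) -/
theorem plus_graph_boundary_identity
    (A : Type*) [Ring A] [Algebra ℝ A] (Aa Ab Ac Ba Bb Bc e : A)
    (hanti : ∀ x ∈ ({Aa, Ab, Ac, Ba, Bb, Bc, e} : Set A),
             ∀ y ∈ ({Aa, Ab, Ac, Ba, Bb, Bc, e} : Set A), x * y = -(y * x))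
    (hsq : ∀ x ∈ ({Aa, Ab, Ac, Ba, Bb, Bc, e} : Set A), x * x = 0)
    (hab : Aa - Ab = Ba - Bb) (hac : Aa - Ac = Ba - Bc) (hbc : Ab - Ac = Bb - Bc) :
    Aa * Ab * Ac * e
      = (1 / 4 : ℝ) •
          ((Ba * Bb - Ba * Bc + Bb * Bc) * (Aa * e + Ab * e + (2 : ℝ) • (Ac * e))) := by
  have hBb : Bb = Ab + (Ba - Aa) := by
    have := hab; rw [sub_eq_sub_iff_add_eq_add] at this; linear_combination (norm := abel) this
  have hBc : Bc = Ac + (Ba - Aa) := by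
    have := hac; rw [sub_eq_sub_iff_add_eq_add] at this; linear_combination (norm := abel) this
  -- pairwise anticommutation facts
  have hba : Ab * Aa = -(Aa * Ab) := hanti Ab (by simp) Aa (by simp)
  have hca : Ac * Aa = -(Aa * Ac) := hanti Ac (by simp) Aa (by simp)
  have hcb : Ac * Ab = -(Ab * Ac) := hanti Ac (by simp) Ab (by simp)
  have hBaa : Ba * Aa = -(Aa * Ba) := hanti Ba (by simp) Aa (by simp)
  have hBab : Ba * Ab = -(Ab * Ba) := hanti Ba (by simp) Ab (by simp)
  have hsa : Aa * Aa = 0 := hsq Aa (by simp)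
  have hsb : Ab * Ab = 0 := hsq Ab (by simp)
  have hsc : Ac * Ac = 0 := hsq Ac (by simp)
  have hsBa : Ba * Ba = 0 := hsq Ba (by simp)
  -- the quadratic factor simplifies
  have hP : Ba * Bb - Ba * Bc + Bb * Bc = Aa * Ab - Aa * Ac + Ab * Ac := by
    rw [hBb, hBc]
    have h1 : (Ba - Aa) * (Ba - Aa) = 0 := by
      rw [sub_mul, mul_sub, mul_sub, hsa, hsBa, hBaa]; abel
    have hab' : Ab * Ba = -(Ba * Ab) := by rw [hBab, neg_neg]
    have h2 : Ab * (Ba - Aa) + (Ba - Aa) * Ab = 0 := by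
      rw [mul_sub, sub_mul, hab', hba]; abel
    have expand : Ba * (Ab + (Ba - Aa)) - Ba * (Ac + (Ba - Aa))
        + (Ab + (Ba - Aa)) * (Ac + (Ba - Aa))
        = Aa * Ab - Aa * Ac + Ab * Ac
          + (Ab * (Ba - Aa) + (Ba - Aa) * Ab) + (Ba - Aa) * (Ba - Aa) := by
      have hBa : Ba = Aa + (Ba - Aa) := by abel
      nth_rewrite 1 [hBa]; nth_rewrite 2 [hBa]
      noncomm_ring
    rw [expand, h1, h2]; abel
  rw [hP]
  -- now the main Grassmann computation
  have key : (Aa * Ab - Aa * Ac + Ab * Ac) * (Aa * e + Ab * e + (2 : ℝ) • (Ac * e))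
      = (4 : ℝ) • (Aa * (Ab * (Ac * e))) := by
    simp only [sub_mul, add_mul, mul_add, mul_smul_comm, mul_assoc]
    simp only [swap_assoc' hba, swap_assoc' hca, swap_assoc' hcb,
      sq_assoc' hsa, sq_assoc' hsb, sq_assoc' hsc,
      mul_neg, neg_neg, mul_zero, neg_zero, smul_neg, smul_zero,
      zero_add, add_zero, zero_sub, sub_zero, sub_neg_eq_add]
    module
  rw [key, smul_smul]
  norm_num [mul_assoc]
end
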